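/- arXiv:1209.2303 — 4 statements merged into one kernel-verified Lean document; each statement's English description precedes it below -/
import Mathlib

section
/- Let q > 1 and k ≥ 1. The function H(s_1,…,s_k) = (1 + Σ_{i=1}^k s_i^{−q})^{1/q − 1} defined on (0,∞)^k is a cumulative distribution function of a probability measure on (0,∞)^k: it is nondecreasing in each coordinate, tends to 1 as all s_i → ∞, tends to 0 as any s_i → 0, and (for k-dimensional rectangles) assigns nonnegative mass. -/
open Filter Real

/-- FTC helper: `c^β - (c+d)^β = ∫_0^d (-β)(c+s)^(β-1) ds` for `c > 0`, `0 ≤ d`. -/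
lemma ftc_rpow (c d β : ℝ) (hc : 0 < c) (hd : 0 ≤ d) :
    c ^ β - (c + d) ^ β = ∫ s in (0:ℝ)..d, (-β) * (c + s) ^ (β - 1) := by
  have hpos : ∀ s ∈ Set.uIcc (0:ℝ) d, 0 < c + s := by
    intro s hs
    rw [Set.uIcc_of_le hd] at hs
    have := hs.1
    linarith
  have hderiv : ∀ s ∈ Set.uIcc (0:ℝ) d,
      HasDerivAt (fun s => -((c + s) ^ β)) ((-β) * (c + s) ^ (β - 1)) s := by
    intro s hs
    have h1 : HasDerivAt (fun s : ℝ => c + s) 1 s := by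
      simpa using (hasDerivAt_id s).const_add c
    have h2 : HasDerivAt (fun x : ℝ => x ^ β) (β * (c + s) ^ (β - 1)) (c + s) :=
      Real.hasDerivAt_rpow_const (Or.inl (ne_of_gt (hpos s hs)))
    have h3 := (h2.comp s h1)
    have h4 : HasDerivAt (fun s : ℝ => (c + s) ^ β) (β * (c + s) ^ (β - 1)) s := by
      simpa [Function.comp_def] using h3
    rw [neg_mul]; exact h4.neg
  have hint : IntervalIntegrable (fun s => (-β) * (c + s) ^ (β - 1))
      MeasureTheory.volume 0 d := by
    apply ContinuousOn.intervalIntegrable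
    apply ContinuousOn.mul continuousOn_const
    exact (continuousOn_const.add continuousOn_id).rpow_const
      (fun x hx => Or.inl (ne_of_gt (hpos x hx)))
  have := intervalIntegral.integral_eq_sub_of_hasDerivAt hderiv hint
  rw [this]; ring

/-- Key lemma: alternating sums of `(1+b+∑_{i∈S} d_i)^β` over subsets are nonnegative
for `β ≤ 0`, `b ≥ 0`, `d ≥ 0`. -/
lemma keyA {ι : Type*} [DecidableEq ι] (T : Finset ι) :
    ∀ (β b : ℝ), β ≤ 0 → 0 ≤ b → ∀ d : ι → ℝ, (∀ i, 0 ≤ d i) →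
    0 ≤ ∑ S ∈ T.powerset, (-1:ℝ)^S.card * (1 + b + ∑ i ∈ S, d i) ^ β := by
  induction T using Finset.induction with
  | empty =>
      intro β b hβ hb d hd
      simp only [Finset.powerset_empty, Finset.sum_singleton, Finset.card_empty,
        Finset.sum_empty, pow_zero, one_mul, add_zero]
      positivity
  | @insert a T ha IH =>
      intro β b hβ hb d hd
      have hσ : ∀ S : Finset ι, (0:ℝ) ≤ ∑ i ∈ S, d i :=
        fun S => Finset.sum_nonneg fun i _ => hd i
      rw [Finset.sum_powerset_insert ha]
      have hcard : ∀ S ∈ T.powerset,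
          (-1:ℝ)^(insert a S).card * (1 + b + ∑ i ∈ insert a S, d i) ^ β
          = -((-1:ℝ)^S.card * (1 + b + (∑ i ∈ S, d i + d a)) ^ β) := by
        intro S hS
        have haS : a ∉ S := fun h => ha (Finset.mem_powerset.mp hS h)
        rw [Finset.card_insert_of_notMem haS, Finset.sum_insert haS]
        ring_nf
      rw [Finset.sum_congr rfl hcard]
      have key : ∀ S ∈ T.powerset,
          (-1:ℝ)^S.card * (1 + b + ∑ i ∈ S, d i) ^ β
            + -((-1:ℝ)^S.card * (1 + b + (∑ i ∈ S, d i + d a)) ^ β)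
          = ∫ s in (0:ℝ)..(d a),
              (-1:ℝ)^S.card * ((-β) * (1 + b + ∑ i ∈ S, d i + s) ^ (β - 1)) := by
        intro S _
        have hc : 0 < 1 + b + ∑ i ∈ S, d i := by
          have := hσ S; linarith
        have := ftc_rpow (1 + b + ∑ i ∈ S, d i) (d a) β hc (hd a)
        rw [intervalIntegral.integral_const_mul, ← this]
        ring_nf
      rw [← Finset.sum_add_distrib, Finset.sum_congr rfl key]
      have hintegr : ∀ S ∈ T.powerset, IntervalIntegrable
          (fun s => (-1:ℝ)^S.card * ((-β) * (1 + b + ∑ i ∈ S, d i + s) ^ (β - 1)))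
          MeasureTheory.volume 0 (d a) := by
        intro S _
        apply ContinuousOn.intervalIntegrable
        apply ContinuousOn.mul continuousOn_const
        apply ContinuousOn.mul continuousOn_const
        apply (continuousOn_const.add continuousOn_id).rpow_const
        intro x hx
        left
        rw [Set.uIcc_of_le (hd a)] at hx
        have := hx.1
        have := hσ S
        exact ne_of_gt (show (0:ℝ) < 1 + b + ∑ i ∈ S, d i + x by linarith)
      rw [← intervalIntegral.integral_finset_sum hintegr]
      apply intervalIntegral.integral_nonneg (hd a)
      intro u hu
      have hbu : 0 ≤ b + u := by have := hu.1; linarith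
      have := IH (β - 1) (b + u) (by linarith) hbu d hd
      calc (0:ℝ) ≤ (-β) * ∑ S ∈ T.powerset,
            (-1:ℝ)^S.card * (1 + (b + u) + ∑ i ∈ S, d i) ^ (β - 1) :=
          mul_nonneg (by linarith) this
        _ = ∑ S ∈ T.powerset,
            (-1:ℝ)^S.card * ((-β) * (1 + b + ∑ i ∈ S, d i + u) ^ (β - 1)) := by
          rw [Finset.mul_sum]
          apply Finset.sum_congr rfl
          intro S _
          ring_nf

/-- `H(s) = (1 + ∑ s_i^{-q})^{1/q - 1}` on `(0,∞)^k` is a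
cumulative distribution function: coordinatewise nondecreasing, tends to 1 as
all coordinates tend to ∞, tends to 0 as any coordinate tends to 0, and assigns
nonnegative mass to rectangles. -/
theorem stmt4 (k : ℕ) (hk : 1 ≤ k) (q : ℝ) (hq : 1 < q)
    (H : (Fin k → ℝ) → ℝ)
    (hH : ∀ s, H s = (1 + ∑ i, s i ^ (-q)) ^ (q⁻¹ - 1)) :
    (∀ s t : Fin k → ℝ, (∀ i, 0 < s i) → (∀ i, s i ≤ t i) → H s ≤ H t) ∧
    (Tendsto (fun t : ℝ => H (fun _ => t)) atTop (nhds 1)) ∧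
    (∀ (s : Fin k → ℝ), (∀ i, 0 < s i) → ∀ i : Fin k,
      Tendsto (fun ε : ℝ => H (Function.update s i ε)) (nhdsWithin 0 (Set.Ioi 0))
        (nhds 0)) ∧
    (∀ a b : Fin k → ℝ, (∀ i, 0 < a i) → (∀ i, a i ≤ b i) →
      0 ≤ ∑ S : Finset (Fin k),
        (-1 : ℝ) ^ S.card * H (fun i => if i ∈ S then a i else b i)) := by
  have hq0 : 0 < q := lt_trans one_pos hq
  have hinv : q⁻¹ < 1 := by
    rw [inv_lt_one_iff₀]; right; exact hq
  have hexp : q⁻¹ - 1 ≤ 0 := by linarith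
  refine ⟨?_, ?_, ?_, ?_⟩
  · -- monotone
    intro s t hs hst
    rw [hH, hH]
    apply Real.rpow_le_rpow_of_nonpos _ _ hexp
    · have : ∀ i : Fin k, (0:ℝ) ≤ t i ^ (-q) :=
        fun i => Real.rpow_nonneg (le_trans (hs i).le (hst i)) _
      have := Finset.sum_nonneg (fun i (_ : i ∈ Finset.univ) => this i)
      linarith
    · have : ∀ i ∈ Finset.univ, t i ^ (-q) ≤ s i ^ (-q) := by
        intro i _
        exact Real.rpow_le_rpow_of_nonpos (hs i) (hst i) (by linarith)
      have := Finset.sum_le_sum this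
      linarith
  · -- tendsto 1 at atTop
    have h1 : Tendsto (fun t : ℝ => (1 + ∑ _i : Fin k, t ^ (-q)))
        atTop (nhds (1 + 0)) := by
      apply Tendsto.const_add
      have : Tendsto (fun t : ℝ => t ^ (-q)) atTop (nhds 0) :=
        tendsto_rpow_neg_atTop hq0
      have hs : Tendsto (fun t : ℝ => ∑ _i : Fin k, t ^ (-q)) atTop
          (nhds (∑ _i : Fin k, (0:ℝ))) := tendsto_finset_sum _ (fun i _ => this)
      simpa using hs
    rw [add_zero] at h1
    have h2 : Tendsto (fun u : ℝ => u ^ (q⁻¹ - 1)) (nhds 1) (nhds 1) := by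
      have := (Real.continuousAt_rpow_const 1 (q⁻¹ - 1) (Or.inl one_ne_zero)).tendsto
      simpa using this
    have := h2.comp h1
    simp only [hH]
    exact this
  · -- tendsto 0 as a coordinate → 0
    intro s hs i
    simp only [hH]
    have hupdate : ∀ ε : ℝ,
        (∑ j, Function.update s i ε j ^ (-q))
          = ε ^ (-q) + ∑ j ∈ Finset.univ \ {i}, s j ^ (-q) := by
      intro ε
      have : (fun j => Function.update s i ε j ^ (-q))
          = Function.update (fun j => s j ^ (-q)) i (ε ^ (-q)) := by
        funext j
        by_cases h : j = i
        · subst h; simp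
        · simp [Function.update_of_ne h]
      rw [this, Finset.sum_update_of_mem (Finset.mem_univ i)]
    have hbase : Tendsto (fun ε : ℝ => 1 + ∑ j, Function.update s i ε j ^ (-q))
        (nhdsWithin 0 (Set.Ioi 0)) atTop := by
      simp only [hupdate]
      apply tendsto_atTop_add_const_left
      apply tendsto_atTop_add_const_right
      -- ε^(-q) → ∞ as ε → 0+
      have h1 : Tendsto (fun ε : ℝ => ε⁻¹) (nhdsWithin 0 (Set.Ioi 0)) atTop :=
        tendsto_inv_nhdsGT_zero
      have h2 : Tendsto (fun x : ℝ => x ^ q) atTop atTop := tendsto_rpow_atTop hq0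
      have h3 := h2.comp h1
      apply h3.congr'
      filter_upwards [self_mem_nhdsWithin] with ε (hε : ε ∈ Set.Ioi 0)
      simp only [Function.comp]
      rw [Real.inv_rpow (le_of_lt hε), ← Real.rpow_neg (le_of_lt hε)]
    have h2 : Tendsto (fun u : ℝ => u ^ (q⁻¹ - 1)) atTop (nhds 0) := by
      have h := tendsto_rpow_neg_atTop (y := 1 - q⁻¹) (by linarith [hinv])
      have : -(1 - q⁻¹) = q⁻¹ - 1 := by ring
      rw [this] at h
      exact h
    exact h2.comp hbase
  · -- rectangle nonnegativity
    intro a b ha hab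
    have hb : ∀ i, 0 < b i := fun i => lt_of_lt_of_le (ha i) (hab i)
    set d : Fin k → ℝ := fun i => a i ^ (-q) - b i ^ (-q) with hd_def
    have hd : ∀ i, 0 ≤ d i := by
      intro i
      have := Real.rpow_le_rpow_of_nonpos (ha i) (hab i) (by linarith : -q ≤ 0)
      simp [hd_def]; linarith
    set B : ℝ := ∑ i, b i ^ (-q) with hB_def
    have hB : 0 ≤ B := Finset.sum_nonneg fun i _ => Real.rpow_nonneg (hb i).le _
    have hterm : ∀ S : Finset (Fin k),
        H (fun i => if i ∈ S then a i else b i)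
          = (1 + B + ∑ i ∈ S, d i) ^ (q⁻¹ - 1) := by
      intro S
      rw [hH]
      congr 1
      have : ∀ i : Fin k, (if i ∈ S then a i else b i) ^ (-q)
          = b i ^ (-q) + (if i ∈ S then d i else 0) := by
        intro i
        by_cases h : i ∈ S <;> simp [h, hd_def]
      simp only [this]
      rw [Finset.sum_add_distrib, Finset.sum_ite_mem]
      simp [hB_def, add_assoc]
    simp only [hterm]
    have := keyA (Finset.univ : Finset (Fin k)) (q⁻¹ - 1) B hexp hB d hd
    rwa [Finset.powerset_univ] at this
end

section
/- Let μ be a measure on (0,∞)×[0,∞)^k, homogeneous of order −1, with μ((1,∞)×[0,∞)^k) = 1. Let T(x) = (x_0, x_1/x_0, …, x_k/x_0) and let μ̃ = μ∘T^{-1} be the pushforward of μ under T. Then μ̃((c,∞)×[0,s]) = c^{-1}·μ(B_s ∩ A) for all c > 0 and s ∈ [0,∞)^k, where A = (1,∞)×[0,∞)^k and B_s = {x : (x_1,…,x_k) ≤ x_0 s}. In particular, μ̃ is a product of the measure u^{-2}du on (0,∞) with a probability measure on [0,∞)^k. -/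
open MeasureTheory Set Pointwise

/-- if `μ` is homogeneous of order `-1` with `μ(A) = 1`,
`A = (1,∞)×[0,∞)^k`, then the pushforward `μ̃ = μ ∘ T⁻¹` under
`T(x) = (x₀, x₁/x₀, …, x_k/x₀)` satisfies
`μ̃((c,∞)×[0,s]) = c⁻¹ μ(B_s ∩ A)`; in particular `μ̃` is the product of
`u⁻² du` with a probability measure on `[0,∞)^k`. -/
theorem stmt6 (k : ℕ) (μ : Measure (Fin (k + 1) → ℝ))
    (hconc : μ {x | ¬ (0 < x 0 ∧ ∀ i : Fin k, 0 ≤ x i.succ)} = 0)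
    (hhom : ∀ (c : ℝ), 0 < c → ∀ B : Set (Fin (k + 1) → ℝ),
      μ (c • B) = ENNReal.ofReal c⁻¹ * μ B)
    (hA : μ {x | 1 < x 0 ∧ ∀ i : Fin k, 0 ≤ x i.succ} = 1)
    (T : (Fin (k + 1) → ℝ) → (Fin (k + 1) → ℝ))
    (hT : ∀ x, T x = fun j => if j = 0 then x 0 else x j / x 0) :
    (∀ (c : ℝ), 0 < c → ∀ s : Fin k → ℝ, (∀ i, 0 ≤ s i) →
      μ (T ⁻¹' {y | c < y 0 ∧ ∀ i : Fin k, 0 ≤ y i.succ ∧ y i.succ ≤ s i}) =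
        ENNReal.ofReal c⁻¹ *
          μ ({x | (0 < x 0 ∧ ∀ i : Fin k, 0 ≤ x i.succ) ∧
                ∀ i : Fin k, x i.succ ≤ x 0 * s i} ∩
              {x | 1 < x 0 ∧ ∀ i : Fin k, 0 ≤ x i.succ})) ∧
    (∃ ν : Measure (Fin k → ℝ), IsProbabilityMeasure ν ∧
      ∀ (c : ℝ), 0 < c → ∀ s : Fin k → ℝ, (∀ i, 0 ≤ s i) →
        μ (T ⁻¹' {y | c < y 0 ∧ ∀ i : Fin k, 0 ≤ y i.succ ∧ y i.succ ≤ s i}) =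
          ENNReal.ofReal c⁻¹ * ν {z | ∀ i : Fin k, 0 ≤ z i ∧ z i ≤ s i}) := by
  -- notation
  set C : Set (Fin (k + 1) → ℝ) := {x | 0 < x 0 ∧ ∀ i : Fin k, 0 ≤ x i.succ} with hCdef
  set A : Set (Fin (k + 1) → ℝ) := {x | 1 < x 0 ∧ ∀ i : Fin k, 0 ≤ x i.succ} with hAdef
  have hC : μ Cᶜ = 0 := hconc
  -- E₁ depends on s
  have key : ∀ (c : ℝ), 0 < c → ∀ s : Fin k → ℝ, (∀ i, 0 ≤ s i) →
      μ (T ⁻¹' {y | c < y 0 ∧ ∀ i : Fin k, 0 ≤ y i.succ ∧ y i.succ ≤ s i}) =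
        ENNReal.ofReal c⁻¹ *
          μ {x | 1 < x 0 ∧ ∀ i : Fin k, 0 ≤ x i.succ ∧ x i.succ ≤ x 0 * s i} := by
    intro c hc s hs
    set E₁ : Set (Fin (k + 1) → ℝ) :=
      {x | 1 < x 0 ∧ ∀ i : Fin k, 0 ≤ x i.succ ∧ x i.succ ≤ x 0 * s i} with hE₁
    set Ec : Set (Fin (k + 1) → ℝ) :=
      {x | c < x 0 ∧ ∀ i : Fin k, 0 ≤ x i.succ ∧ x i.succ ≤ x 0 * s i} with hEc
    have h1 : T ⁻¹' {y | c < y 0 ∧ ∀ i : Fin k, 0 ≤ y i.succ ∧ y i.succ ≤ s i} ∩ C = Ec := by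
      ext x
      simp only [mem_inter_iff, mem_preimage, mem_setOf_eq, hT x, hEc, hCdef,
        Fin.succ_ne_zero, if_true, if_false, ite_true, ite_false, eq_self_iff_true]
      constructor
      · rintro ⟨⟨h0, hcoord⟩, hx0, _⟩
        refine ⟨h0, fun i => ?_⟩
        have := hcoord i
        exact ⟨(div_nonneg_iff.mp this.1).resolve_right
            (fun h => by nlinarith [h.1, h.2]) |>.1,
          (div_le_iff₀' hx0).mp this.2⟩
      · rintro ⟨h0, hcoord⟩
        have hx0 : 0 < x 0 := lt_trans hc h0
        exact ⟨⟨h0, fun i => ⟨div_nonneg (hcoord i).1 hx0.le,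
          (div_le_iff₀' hx0).mpr (hcoord i).2⟩⟩, hx0, fun i => (hcoord i).1⟩
    have h2 : Ec = c • E₁ := by
      ext y
      rw [Set.mem_smul_set_iff_inv_smul_mem₀ hc.ne']
      simp only [hEc, hE₁, mem_setOf_eq, Pi.smul_apply, smul_eq_mul]
      have hc' : 0 < c⁻¹ := inv_pos.2 hc
      constructor
      · rintro ⟨h0, hcoord⟩
        refine ⟨by rw [← div_eq_inv_mul, lt_div_iff₀ hc, one_mul]; exact h0, fun i => ?_⟩
        exact ⟨mul_nonneg hc'.le (hcoord i).1,
          by rw [mul_assoc]; exact mul_le_mul_of_nonneg_left (hcoord i).2 hc'.le⟩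
      · rintro ⟨h0, hcoord⟩
        rw [← div_eq_inv_mul, lt_div_iff₀ hc, one_mul] at h0
        refine ⟨h0, fun i => ?_⟩
        obtain ⟨hi1, hi2⟩ := hcoord i
        constructor
        · nlinarith
        · rw [mul_assoc] at hi2
          exact le_of_mul_le_mul_left hi2 hc'
    calc μ (T ⁻¹' {y | c < y 0 ∧ ∀ i : Fin k, 0 ≤ y i.succ ∧ y i.succ ≤ s i})
        = μ (T ⁻¹' {y | c < y 0 ∧ ∀ i : Fin k, 0 ≤ y i.succ ∧ y i.succ ≤ s i} ∩ C) :=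
          (measure_inter_conull hC).symm
      _ = μ Ec := by rw [h1]
      _ = μ (c • E₁) := by rw [h2]
      _ = ENNReal.ofReal c⁻¹ * μ E₁ := hhom c hc E₁
  constructor
  · intro c hc s hs
    rw [key c hc s hs]
    congr 1
    congr 1
    ext x
    simp only [mem_inter_iff, mem_setOf_eq, hAdef]
    constructor
    · rintro ⟨h0, hcoord⟩
      exact ⟨⟨⟨lt_trans one_pos h0, fun i => (hcoord i).1⟩, fun i => (hcoord i).2⟩,
        h0, fun i => (hcoord i).1⟩
    · rintro ⟨⟨⟨_, hnn⟩, hle⟩, h0, _⟩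
      exact ⟨h0, fun i => ⟨hnn i, hle i⟩⟩
  · -- the probability measure
    have hf : Measurable fun (x : Fin (k + 1) → ℝ) => fun i : Fin k => x i.succ / x 0 :=
      measurable_pi_lambda _ fun i => (measurable_pi_apply i.succ).div (measurable_pi_apply 0)
    have hAm : MeasurableSet A := by
      have : A = {x : Fin (k + 1) → ℝ | 1 < x 0} ∩ ⋂ i : Fin k, {x | 0 ≤ x i.succ} := by
        ext x; simp [hAdef, mem_iInter]
      rw [this]
      exact (measurableSet_lt measurable_const (measurable_pi_apply 0)).inter
        (MeasurableSet.iInter fun i =>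
          measurableSet_le measurable_const (measurable_pi_apply i.succ))
    refine ⟨Measure.map (fun x => fun i : Fin k => x i.succ / x 0) (μ.restrict A), ⟨?_⟩, ?_⟩
    · rw [Measure.map_apply hf MeasurableSet.univ, Set.preimage_univ,
        Measure.restrict_apply MeasurableSet.univ, Set.univ_inter]
      exact hA
    · intro c hc s hs
      have hSm : MeasurableSet {z : Fin k → ℝ | ∀ i : Fin k, 0 ≤ z i ∧ z i ≤ s i} := by
        have : {z : Fin k → ℝ | ∀ i : Fin k, 0 ≤ z i ∧ z i ≤ s i}
            = ⋂ i : Fin k, ({z | 0 ≤ z i} ∩ {z | z i ≤ s i}) := by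
          ext z; simp [mem_iInter, forall_and]
        rw [this]
        exact MeasurableSet.iInter fun i =>
          (measurableSet_le measurable_const (measurable_pi_apply i)).inter
            (measurableSet_le (measurable_pi_apply i) measurable_const)
      rw [key c hc s hs, Measure.map_apply hf hSm, Measure.restrict_apply' hAm]
      congr 2
      ext x
      simp only [mem_inter_iff, mem_preimage, mem_setOf_eq, hAdef]
      constructor
      · rintro ⟨h0, hcoord⟩
        have hx0 : 0 < x 0 := lt_trans one_pos h0
        exact ⟨fun i => ⟨div_nonneg (hcoord i).1 hx0.le,
          (div_le_iff₀' hx0).mpr (hcoord i).2⟩, h0, fun i => (hcoord i).1⟩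
      · rintro ⟨hcoord, h0, hnn⟩
        have hx0 : 0 < x 0 := lt_trans one_pos h0
        exact ⟨h0, fun i => ⟨hnn i, (div_le_iff₀' hx0).mp (hcoord i).2⟩⟩
end

section
/- Let Q ⊂ ℝ^d be compact, L ⊂ ℝ^d compact with Q ⊆ Q⊕L, and let A_L = {f ∈ C(Q⊕L) : max_{t∈Q} f(t) ≥ 1, max_{t∈Q} f(t) = max_{t∈Q⊕L} f(t)}. Let A_L* = {f ∈ C(Q⊕L) : the maximizer t* of f over Q is unique, t* ∈ interior(Q), and f(t*) > max{1, f(t)} for all t ∈ (Q⊕L)\{t*}}. Then A_L* is contained in the interior of A_L. -/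
open Set Pointwise

/-- `A_L* ⊆ interior A_L`, where `A_L*` consists of functions
whose maximum over `Q⊕L` is attained at a unique point `t*` lying in the
interior of `Q` and satisfies `f(t*) > max{1, f(t)}` for `t ≠ t*`. -/
theorem stmt9 (d : ℕ) (Q L : Set (Fin d → ℝ))
    (hQ : IsCompact Q) (hL : IsCompact L) (hQne : Q.Nonempty)
    (hsub : Q ⊆ Q + L) :
    {f : C(↥(Q + L), ℝ) | ∃ t₀ : ↥(Q + L), ↑t₀ ∈ interior Q ∧ 1 < f t₀ ∧
        ∀ t : ↥(Q + L), t ≠ t₀ → f t < f t₀} ⊆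
      interior {f : C(↥(Q + L), ℝ) |
        1 ≤ (⨆ t : Q, f ⟨↑t, hsub t.2⟩) ∧
        (⨆ t : Q, f ⟨↑t, hsub t.2⟩) = ⨆ t : ↥(Q + L), f t} := by
  haveI : CompactSpace ↥(Q + L) := isCompact_iff_compactSpace.mp (hQ.add hL)
  haveI : CompactSpace ↥Q := isCompact_iff_compactSpace.mp hQ
  haveI : Nonempty ↥Q := hQne.to_subtype
  haveI : Nonempty ↥(Q + L) := (hQne.mono hsub).to_subtype
  rintro f ⟨t₀, ht₀Q, h1, hmax⟩
  set K : Set ↥(Q + L) := {t | ↑t ∉ interior Q} with hKdef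
  have hKclosed : IsClosed K := by
    have hop : IsOpen {t : ↥(Q + L) | ↑t ∈ interior Q} :=
      isOpen_interior.preimage continuous_subtype_val
    exact hop.isClosed_compl
  have hKcompact : IsCompact K := hKclosed.isCompact
  obtain ⟨C, hC, hClt⟩ : ∃ C, (∀ t ∈ K, f t ≤ C) ∧ C < f t₀ := by
    rcases K.eq_empty_or_nonempty with h | h
    · exact ⟨1, by simp [h], h1⟩
    · obtain ⟨s, hsK, hs⟩ := hKcompact.exists_isMaxOn h f.continuous.continuousOn
      refine ⟨f s, hs, hmax s ?_⟩
      rintro rfl; exact hsK ht₀Q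
  set ε := min ((f t₀ - 1) / 2) ((f t₀ - C) / 2) with hεdef
  have hε1 : ε ≤ (f t₀ - 1) / 2 := min_le_left _ _
  have hε2 : ε ≤ (f t₀ - C) / 2 := min_le_right _ _
  have hεpos : 0 < ε := lt_min (by linarith) (by linarith)
  have hball : Metric.ball f ε ⊆ {g : C(↥(Q + L), ℝ) |
      1 ≤ (⨆ t : Q, g ⟨↑t, hsub t.2⟩) ∧
      (⨆ t : Q, g ⟨↑t, hsub t.2⟩) = ⨆ t : ↥(Q + L), g t} := by
    intro g hg
    have hdist : ∀ t, |g t - f t| < ε := by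
      intro t
      calc |g t - f t| = dist (g t) (f t) := (Real.dist_eq _ _).symm
        _ ≤ dist g f := ContinuousMap.dist_apply_le_dist t
        _ < ε := hg
    have bddQ : BddAbove (Set.range fun t : Q => g ⟨↑t, hsub t.2⟩) :=
      (isCompact_range (g.continuous.comp
        (continuous_subtype_val.subtype_mk fun t : Q => hsub t.2))).bddAbove
    have bddQL : BddAbove (Set.range fun t : ↥(Q + L) => g t) :=
      (isCompact_range g.continuous).bddAbove
    have ht₀mem : (↑t₀ : Fin d → ℝ) ∈ Q := interior_subset ht₀Q
    have hgt₀ : g t₀ ≤ ⨆ t : Q, g ⟨↑t, hsub t.2⟩ := by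
      have h := le_ciSup bddQ (⟨↑t₀, ht₀mem⟩ : Q)
      simpa [show (⟨↑(⟨↑t₀, ht₀mem⟩ : Q), hsub ht₀mem⟩ : ↥(Q + L)) = t₀ from
        Subtype.ext rfl] using h
    have key : ∀ t : ↥(Q + L), g t ≤ ⨆ t : Q, g ⟨↑t, hsub t.2⟩ := by
      intro t
      by_cases ht : (↑t : Fin d → ℝ) ∈ interior Q
      · have htQ : (↑t : Fin d → ℝ) ∈ Q := interior_subset ht
        have h := le_ciSup bddQ (⟨↑t, htQ⟩ : Q)
        simpa [show (⟨↑(⟨↑t, htQ⟩ : Q), hsub htQ⟩ : ↥(Q + L)) = t from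
          Subtype.ext rfl] using h
      · have htK : t ∈ K := ht
        have h1' := hdist t
        have h2' := hdist t₀
        have h3' := hC t htK
        have : g t ≤ g t₀ := by
          rw [abs_lt] at h1' h2'
          linarith [h1'.1, h1'.2, h2'.1, h2'.2]
        exact this.trans hgt₀
    have hsup_eq : (⨆ t : Q, g ⟨↑t, hsub t.2⟩) = ⨆ t : ↥(Q + L), g t := by
      refine le_antisymm ?_ (ciSup_le key)
      exact ciSup_le fun t => le_ciSup bddQL (⟨↑t, hsub t.2⟩ : ↥(Q + L))
    have h1g : 1 ≤ ⨆ t : Q, g ⟨↑t, hsub t.2⟩ := by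
      have h2' := hdist t₀
      rw [abs_lt] at h2'
      linarith [h2'.1, h2'.2]
    exact ⟨h1g, hsup_eq⟩
  exact interior_maximal hball Metric.isOpen_ball (Metric.mem_ball_self hεpos)
end

section
/- Let F : ℝ^d → (0,∞) be a strictly positive continuous function with ∫_{ℝ^d} F(t)dt = 1. Then the measure ν on (0,∞), defined by ν([z,∞)) = ∫_{ℝ^d} ∫_0^∞ u^{-2}·1{u·F(−t) ≥ z} du dt, satisfies ν([z,∞)) = z^{-1} for all z > 0. More generally, for any Borel set L of continuous positive functions on ℝ^d, ∫_{ℝ^d}∫_0^∞ u^{-2} 1{uF(−t) ≥ z} 1{F(·−t)/F(−t) ∈ L} du dt = z^{-1} ∫_{ℝ^d} 1{F(·−t)/F(−t) ∈ L} F(−t) dt. -/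
open MeasureTheory Set

lemma key_inner (a z : ℝ) (ha : 0 < a) (hz : 0 < z) :
    (∫ u in Set.Ioi (0 : ℝ),
        (u ^ 2)⁻¹ * Set.indicator {u' : ℝ | z ≤ u' * a} 1 u) = a / z := by
  have hset : {u' : ℝ | z ≤ u' * a} = Set.Ici (z / a) := by
    ext u; simp [Set.mem_Ici, div_le_iff₀ ha]
  have hc : 0 < z / a := div_pos hz ha
  have h1 : (fun u : ℝ => (u ^ 2)⁻¹ * Set.indicator (Set.Ici (z / a)) 1 u)
      = Set.indicator (Set.Ici (z / a)) (fun u => (u ^ 2)⁻¹) := by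
    ext u
    by_cases h : u ∈ Set.Ici (z / a) <;> simp [Set.indicator_of_mem, Set.indicator_of_notMem, h]
  rw [hset, h1, integral_indicator measurableSet_Ici, Measure.restrict_restrict measurableSet_Ici]
  have hinter : Set.Ici (z / a) ∩ Set.Ioi (0 : ℝ) = Set.Ici (z / a) := by
    apply Set.inter_eq_self_of_subset_left
    intro u hu
    exact lt_of_lt_of_le hc hu
  rw [hinter, integral_Ici_eq_integral_Ioi]
  have : (∫ u in Set.Ioi (z / a), (u ^ 2)⁻¹) = ∫ u in Set.Ioi (z / a), u ^ (-2 : ℝ) := by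
    apply setIntegral_congr_fun measurableSet_Ioi
    intro u hu
    show (u ^ 2)⁻¹ = u ^ (-2 : ℝ)
    rw [Real.rpow_neg (hc.trans hu).le, show (2:ℝ) = ((2:ℕ):ℝ) by norm_num,
      Real.rpow_natCast]
  rw [this, integral_Ioi_rpow_of_lt (by norm_num) hc]
  norm_num
  rw [Real.rpow_neg_one]
  field_simp

/-- for a strictly positive continuous shape function `F` with
`∫ F = 1`, the intensity computation
`∫∫ u⁻² 1{uF(−t) ≥ z} du dt = z⁻¹`, and more generally, for any set `L` of
functions, `∫∫ u⁻² 1{uF(−t) ≥ z} 1{F(·−t)/F(−t) ∈ L} du dt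
 = z⁻¹ ∫ 1{F(·−t)/F(−t) ∈ L} F(−t) dt`. -/
theorem stmt13 (d : ℕ) (F : (Fin d → ℝ) → ℝ) (hFcont : Continuous F)
    (hFpos : ∀ t, 0 < F t) (hFint : Integrable F) (hF1 : ∫ t, F t = 1) :
    (∀ z : ℝ, 0 < z →
      (∫ x, ∫ u in Set.Ioi (0 : ℝ),
          (u ^ 2)⁻¹ * Set.indicator {u' : ℝ | z ≤ u' * F (-x)} 1 u) = z⁻¹) ∧
    (∀ (L : Set ((Fin d → ℝ) → ℝ)) (z : ℝ), 0 < z →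
      (∫ x, ∫ u in Set.Ioi (0 : ℝ),
          (u ^ 2)⁻¹ * Set.indicator {u' : ℝ | z ≤ u' * F (-x)} 1 u *
            Set.indicator L (fun _ => (1 : ℝ)) (fun y => F (y - x) / F (-x))) =
        z⁻¹ * ∫ x, Set.indicator L (fun _ => (1 : ℝ))
            (fun y => F (y - x) / F (-x)) * F (-x)) := by
  constructor
  · intro z hz
    have h : (fun x : Fin d → ℝ => ∫ u in Set.Ioi (0 : ℝ),
        (u ^ 2)⁻¹ * Set.indicator {u' : ℝ | z ≤ u' * F (-x)} 1 u)
        = fun x => F (-x) / z := by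
      funext x; exact key_inner (F (-x)) z (hFpos _) hz
    rw [h]
    rw [integral_div, integral_neg_eq_self F, hF1, one_div]
  · intro L z hz
    have h : (fun x : Fin d → ℝ => ∫ u in Set.Ioi (0 : ℝ),
          (u ^ 2)⁻¹ * Set.indicator {u' : ℝ | z ≤ u' * F (-x)} 1 u *
            Set.indicator L (fun _ => (1 : ℝ)) (fun y => F (y - x) / F (-x)))
        = fun x => (Set.indicator L (fun _ => (1 : ℝ))
            (fun y => F (y - x) / F (-x)) * F (-x)) * z⁻¹ := by
      funext x
      rw [integral_mul_const, key_inner (F (-x)) z (hFpos _) hz]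
      ring
    rw [h, integral_mul_const, mul_comm]
end
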